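/- For t > 0, the function h_t : ℝ → ℝ defined by h_t(x) = ((x-1)² + t²)⁻¹ + ((x+1)² + t²)⁻¹ is unimodal if and only if t ≥ √3. -/

import Mathlib

open MeasureTheory Real Set Filter Topology

/-- A function `f : ℝ → ℝ` is unimodal if there is a mode `a` such that `f` is
nondecreasing on `(-∞, a]` and nonincreasing on `[a, ∞)`. -/
def Unimodal (f : ℝ → ℝ) : Prop :=
  ∃ a : ℝ, MonotoneOn f (Set.Iic a) ∧ AntitoneOn f (Set.Ici a)

lemma numer_nonpos (t x : ℝ) (h3 : 3 ≤ t ^ 2) (hx : 0 ≤ x) :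
    -(2 * (x - 1)) * ((x + 1) ^ 2 + t ^ 2) ^ 2 +
      -(2 * (x + 1)) * ((x - 1) ^ 2 + t ^ 2) ^ 2 ≤ 0 := by
  nlinarith [mul_nonneg hx (pow_nonneg (sq_nonneg x) 2), mul_nonneg hx (sq_nonneg x),
    mul_nonneg (mul_nonneg hx (sq_nonneg x)) (sq_nonneg t),
    mul_nonneg hx (mul_nonneg (by positivity : (0:ℝ) ≤ t ^ 2 + 1)
      (by linarith : (0:ℝ) ≤ t ^ 2 - 3))]

theorem bernoulli_cauchy_convolution_unimodal_iff (t : ℝ) (ht : 0 < t) :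
    Unimodal (fun x : ℝ =>
      ((x - 1) ^ 2 + t ^ 2)⁻¹ + ((x + 1) ^ 2 + t ^ 2)⁻¹) ↔ Real.sqrt 3 ≤ t := by
  have ht' : t ≠ 0 := ne_of_gt ht
  set f : ℝ → ℝ := fun x => ((x - 1) ^ 2 + t ^ 2)⁻¹ + ((x + 1) ^ 2 + t ^ 2)⁻¹ with hfdef
  have hA : ∀ x : ℝ, (0:ℝ) < (x - 1) ^ 2 + t ^ 2 := fun x => by positivity
  have hB : ∀ x : ℝ, (0:ℝ) < (x + 1) ^ 2 + t ^ 2 := fun x => by positivity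
  have hd : ∀ x : ℝ, HasDerivAt f
      (-(2 * (x - 1)) / ((x - 1) ^ 2 + t ^ 2) ^ 2 +
        -(2 * (x + 1)) / ((x + 1) ^ 2 + t ^ 2) ^ 2) x := by
    intro x
    have h1 : HasDerivAt (fun x : ℝ => (x - 1) ^ 2 + t ^ 2) (2 * (x - 1)) x := by
      have := (((hasDerivAt_id x).sub_const 1).pow 2).add_const (t ^ 2)
      exact this.congr_deriv (by simp)
    have h2 : HasDerivAt (fun x : ℝ => (x + 1) ^ 2 + t ^ 2) (2 * (x + 1)) x := by
      have := (((hasDerivAt_id x).add_const 1).pow 2).add_const (t ^ 2)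
      exact this.congr_deriv (by simp)
    exact (h1.inv (hA x).ne').add (h2.inv (hB x).ne')
  have hf0 : f 0 = (1 + t ^ 2)⁻¹ + (1 + t ^ 2)⁻¹ := by
    simp only [hfdef]; norm_num
  constructor
  · intro hu
    by_contra hlt
    push_neg at hlt
    have h3 : t ^ 2 < 3 := by
      have hs : Real.sqrt 3 ^ 2 = 3 := Real.sq_sqrt (by norm_num)
      nlinarith [Real.sqrt_nonneg 3]
    set ε : ℝ := Real.sqrt (3 - t ^ 2) / 2 with hεdef
    have hε : 0 < ε := by
      have : (0:ℝ) < Real.sqrt (3 - t ^ 2) := Real.sqrt_pos.2 (by linarith)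
      positivity
    have hε2 : ε ^ 2 = (3 - t ^ 2) / 4 := by
      rw [hεdef, div_pow, Real.sq_sqrt (by linarith)]
      norm_num
    have hε3 : ε ^ 2 < 3 - t ^ 2 := by rw [hε2]; linarith
    have hεA := hA ε
    have hεB := hB ε
    have h1t : (0:ℝ) < 1 + t ^ 2 := by positivity
    have hkey : f 0 < f ε := by
      have e : f ε - f 0 = 2 * ε ^ 2 * (3 - t ^ 2 - ε ^ 2) /
          (((ε - 1) ^ 2 + t ^ 2) * ((ε + 1) ^ 2 + t ^ 2) * (1 + t ^ 2)) := by
        rw [hf0]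
        simp only [hfdef]
        field_simp
        ring
      have hpos : 0 < 2 * ε ^ 2 * (3 - t ^ 2 - ε ^ 2) /
          (((ε - 1) ^ 2 + t ^ 2) * ((ε + 1) ^ 2 + t ^ 2) * (1 + t ^ 2)) := by
        apply div_pos
        · nlinarith
        · positivity
      clear_value f ε
      linarith
    have hfe : f (-ε) = f ε := by
      simp only [hfdef]
      ring_nf
    clear_value f ε
    obtain ⟨a, hmono, hanti⟩ := hu
    rcases le_total a 0 with ha | ha
    · have := hanti (show (0:ℝ) ∈ Set.Ici a from ha) (show ε ∈ Set.Ici a by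
        simp only [Set.mem_Ici]; linarith) hε.le
      linarith
    · have := hmono (show -ε ∈ Set.Iic a by simp only [Set.mem_Iic]; linarith)
        (show (0:ℝ) ∈ Set.Iic a from ha) (by linarith)
      rw [hfe] at this
      linarith
  · intro hst
    have h3 : 3 ≤ t ^ 2 := by
      have hs : Real.sqrt 3 ^ 2 = 3 := Real.sq_sqrt (by norm_num)
      nlinarith [Real.sqrt_nonneg 3]
    have hdiff : Differentiable ℝ f := fun x => (hd x).differentiableAt
    have hcont : Continuous f := hdiff.continuous
    have heq : ∀ x : ℝ, -(2 * (x - 1)) / ((x - 1) ^ 2 + t ^ 2) ^ 2 +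
        -(2 * (x + 1)) / ((x + 1) ^ 2 + t ^ 2) ^ 2
        = (-(2 * (x - 1)) * ((x + 1) ^ 2 + t ^ 2) ^ 2 +
            -(2 * (x + 1)) * ((x - 1) ^ 2 + t ^ 2) ^ 2) /
          (((x - 1) ^ 2 + t ^ 2) ^ 2 * ((x + 1) ^ 2 + t ^ 2) ^ 2) := by
      intro x
      have := (hA x).ne'
      have := (hB x).ne'
      field_simp
      try ring
    refine ⟨0, ?_, ?_⟩
    · apply monotoneOn_of_deriv_nonneg (convex_Iic 0) hcont.continuousOn
        hdiff.differentiableOn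
      intro x hx
      rw [interior_Iic] at hx
      rw [(hd x).deriv, heq x]
      apply div_nonneg _ (by positivity)
      have hN := numer_nonpos t (-x) h3 (by simpa using le_of_lt hx)
      nlinarith [hN]
    · apply antitoneOn_of_deriv_nonpos (convex_Ici 0) hcont.continuousOn
        hdiff.differentiableOn
      intro x hx
      rw [interior_Ici] at hx
      rw [(hd x).deriv, heq x]
      apply div_nonpos_of_nonpos_of_nonneg _ (by positivity)
      exact numer_nonpos t x h3 (le_of_lt hx)
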